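/- Let n and λ be real numbers with 2 < n < 4, let α = (2−n)/2, p = (n+2)/(n−2), and define G(θ) = −α² + (λ − n(n−2)/4)·sinh²(θ). Let 0 ≤ a < b and suppose v : (a,b) → ℝ is positive, twice differentiable, and satisfies sinh²(θ)·v''(θ) + sinh(θ)·cosh(θ)·v'(θ) + G(θ)·v(θ) + v(θ)^p = 0 on (a,b). Then the energy E(θ) := sinh²(θ)·v'(θ)² + (2/(p+1))·v(θ)^{p+1} + G(θ)·v(θ)² satisfies E'(θ) = 2·(λ − n(n−2)/4)·sinh(θ)·cosh(θ)·v(θ)² for all θ ∈ (a,b). -/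

import Mathlib

open Real Set

noncomputable section

/-- The energy identity of Section 5: for a positive solution `v` of the
transformed Brezis–Nirenberg equation
`sinh²θ · v'' + sinh θ cosh θ · v' + G(θ) v + v^p = 0` with
`G(θ) = -α² + (λ - n(n-2)/4) sinh²θ`, the energy
`E = sinh²θ · v'² + (2/(p+1)) v^{p+1} + G v²` satisfies
`E'(θ) = G'(θ) v(θ)² = 2(λ - n(n-2)/4) sinh θ cosh θ · v(θ)²`. -/
theorem energy_identity (n lam α p a b : ℝ)
    (hn2 : 2 < n) (hn4 : n < 4)
    (hα : α = (2 - n) / 2) (hp : p = (n + 2) / (n - 2))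
    (ha : 0 ≤ a) (hab : a < b)
    (G : ℝ → ℝ)
    (hG : G = fun θ : ℝ => -α ^ 2 + (lam - n * (n - 2) / 4) * Real.sinh θ ^ 2)
    (v v' v'' : ℝ → ℝ)
    (hvpos : ∀ θ ∈ Ioo a b, 0 < v θ)
    (hv : ∀ θ ∈ Ioo a b, HasDerivAt v (v' θ) θ)
    (hv' : ∀ θ ∈ Ioo a b, HasDerivAt v' (v'' θ) θ)
    (hode : ∀ θ ∈ Ioo a b,
      Real.sinh θ ^ 2 * v'' θ + Real.sinh θ * Real.cosh θ * v' θ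
        + G θ * v θ + v θ ^ p = 0)
    (E : ℝ → ℝ)
    (hE : E = fun θ : ℝ => Real.sinh θ ^ 2 * v' θ ^ 2
      + (2 / (p + 1)) * v θ ^ (p + 1) + G θ * v θ ^ 2) :
    ∀ θ ∈ Ioo a b,
      HasDerivAt E
        (2 * (lam - n * (n - 2) / 4) * Real.sinh θ * Real.cosh θ * v θ ^ 2) θ := by
  intro θ hθ
  have hvθ := hv θ hθ
  have hv'θ := hv' θ hθ
  have hodeθ := hode θ hθ
  have hvp := hvpos θ hθ
  have hp0 : 0 < p := by
    rw [hp]; apply div_pos <;> linarith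
  have hp1 : p + 1 ≠ 0 := by positivity
  set c := lam - n * (n - 2) / 4 with hc
  have h1 : HasDerivAt (fun θ => Real.sinh θ ^ 2 * v' θ ^ 2)
      (2 * Real.sinh θ ^ 1 * Real.cosh θ * v' θ ^ 2
        + Real.sinh θ ^ 2 * (2 * v' θ ^ 1 * v'' θ)) θ :=
    ((Real.hasDerivAt_sinh θ).pow 2).mul (hv'θ.pow 2)
  have h2 : HasDerivAt (fun θ => (2 / (p + 1)) * v θ ^ (p + 1))
      ((2 / (p + 1)) * (v' θ * (p + 1) * v θ ^ p)) θ := by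
    have := (hvθ.rpow_const (p := p + 1) (Or.inl hvp.ne')).const_mul (2 / (p + 1))
    simpa [add_sub_cancel_right] using this
  have h3 : HasDerivAt (fun θ => G θ * v θ ^ 2)
      ((2 * c * Real.sinh θ ^ 1 * Real.cosh θ) * v θ ^ 2
        + G θ * (2 * v θ ^ 1 * v' θ)) θ := by
    have hGd : HasDerivAt G (2 * c * Real.sinh θ ^ 1 * Real.cosh θ) θ := by
      rw [hG]
      have := (((Real.hasDerivAt_sinh θ).pow 2).const_mul c).const_add (-α ^ 2)
      convert this using 1
      · rfl
      · rfl
      · rfl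
      · norm_num; ring
    exact hGd.mul (hvθ.pow 2)
  have hEd := (h1.add h2).add h3
  rw [hE]
  convert hEd using 1
  · rfl
  · rfl
  · rfl
  have hpp : (2 / (p + 1)) * (v' θ * (p + 1) * v θ ^ p) = 2 * v θ ^ p * v' θ := by
    field_simp
  rw [hpp]
  simp only [pow_one]
  linear_combination (-2 * v' θ) * hodeθ

end
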